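/- arXiv:2309.05225 — 6 statements merged into one kernel-verified Lean document; each statement's English description precedes it below -/
import Mathlib

section
/- Let X be a compact metric space, f_{0,∞} = {f_n} a sequence of continuous self-maps on X, Λ ⊂ X nonempty, and A an increasing sequence of nonnegative integers. Then the topological sequence entropy of f_{0,∞} on Λ along A defined via open covers equals the one defined via separated sets (equivalently via spanning sets). -/
open Filter Set MeasureTheory

/-- `nacomp f i n = f (i+n-1) ∘ ⋯ ∘ f i`, the `n`-fold composition of the
nonautonomous system starting at index `i`. -/
def nacomp {X : Type*} (f : ℕ → X → X) (i : ℕ) : ℕ → X → X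
  | 0 => id
  | n + 1 => f (i + n) ∘ nacomp f i n

/-- `E` is an `(n, ε, A)`-separated subset of `Λ` for the nonautonomous system `f`. -/
def IsSepSet {X : Type*} [PseudoMetricSpace X] (f : ℕ → X → X) (A : ℕ → ℕ) (n : ℕ)
    (ε : ℝ) (Λ : Set X) (E : Finset X) : Prop :=
  ↑E ⊆ Λ ∧ ∀ x ∈ E, ∀ y ∈ E, x ≠ y →
    ∃ j : Fin n, ε < dist (nacomp f 0 (A j) x) (nacomp f 0 (A j) y)

/-- `s_n(ε, A, f, Λ)`: maximal cardinality of an `(n,ε,A)`-separated subset of `Λ`. -/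
noncomputable def maxSep {X : Type*} [PseudoMetricSpace X] (f : ℕ → X → X) (A : ℕ → ℕ)
    (n : ℕ) (ε : ℝ) (Λ : Set X) : ℕ :=
  sSup {m | ∃ E : Finset X, IsSepSet f A n ε Λ E ∧ E.card = m}

/-- Topological sequence entropy of `f` on `Λ` along `A`, via separated sets:
`lim_{ε → 0} limsup_n (1/n) log s_n(ε,A,f,Λ)`, the limit realized as a supremum over `ε > 0`. -/
noncomputable def sepEnt {X : Type*} [PseudoMetricSpace X] (f : ℕ → X → X) (A : ℕ → ℕ)
    (Λ : Set X) : EReal :=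
  ⨆ ε : {ε : ℝ // 0 < ε},
    limsup (fun n : ℕ => ((Real.log (maxSep f A n ε Λ) / n : ℝ) : EReal)) atTop

/-- A finite open cover of the whole space. -/
def IsFinOpenCover {X : Type*} [TopologicalSpace X] (𝒜 : Finset (Set X)) : Prop :=
  (∀ u ∈ 𝒜, IsOpen u) ∧ ⋃₀ ↑𝒜 = (univ : Set X)

/-- A cell `⋂_j (f_0^{a_j})⁻¹ (u j)` of the join `⋁_{j} f_0^{-a_j} 𝒜`. -/
def seqCell {X : Type*} (f : ℕ → X → X) (A : ℕ → ℕ) (n : ℕ) (u : Fin n → Set X) : Set X :=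
  ⋂ j : Fin n, nacomp f 0 (A j.1) ⁻¹' (u j)

/-- `N((⋁_{j=1}^n f_0^{-a_j} 𝒜)|_Λ)`: the minimal cardinality of a subfamily of the join
cover whose union contains `Λ`. -/
noncomputable def coverN {X : Type*} (f : ℕ → X → X) (A : ℕ → ℕ) (n : ℕ) (Λ : Set X)
    (𝒜 : Finset (Set X)) : ℕ :=
  sInf {m | ∃ S : Finset (Fin n → Set X), (∀ u ∈ S, ∀ j, u j ∈ 𝒜) ∧
    (Λ ⊆ ⋃ u ∈ S, seqCell f A n u) ∧ S.card = m}

/-- `h_A(f, Λ, 𝒜)`, the sequence entropy of `f` on `Λ` relative to the open cover `𝒜`. -/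
noncomputable def coverEntOf {X : Type*} (f : ℕ → X → X) (A : ℕ → ℕ) (Λ : Set X)
    (𝒜 : Finset (Set X)) : EReal :=
  limsup (fun n : ℕ => ((Real.log (coverN f A n Λ 𝒜) / n : ℝ) : EReal)) atTop

/-- `h_A(f, Λ)`: topological sequence entropy via open covers. -/
noncomputable def coverEnt {X : Type*} [TopologicalSpace X] (f : ℕ → X → X) (A : ℕ → ℕ)
    (Λ : Set X) : EReal :=
  ⨆ 𝒜 : {𝒜 : Finset (Set X) // IsFinOpenCover 𝒜}, coverEntOf f A Λ 𝒜

/-- The supremum topological sequence entropy `h*(f) = sup_A h_A(f)`. -/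
noncomputable def supSeqEnt {X : Type*} [PseudoMetricSpace X] (f : ℕ → X → X) : EReal :=
  ⨆ A : {A : ℕ → ℕ // StrictMono A}, sepEnt f A univ

/-- The `n`-th compositions system `f_{0,∞}^n`, whose `k`-th map is `f_{kn}^n`. -/
def compSys {X : Type*} (f : ℕ → X → X) (n : ℕ) : ℕ → X → X :=
  fun k => nacomp f (k * n) n

/-- A finite measurable partition of the space. -/
def IsFinMeasPartition {X : Type*} [MeasurableSpace X] (P : Finset (Set X)) : Prop :=
  (∀ s ∈ P, MeasurableSet s) ∧ ((P : Set (Set X)).PairwiseDisjoint id) ∧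
    ⋃₀ ↑P = (univ : Set X)

/-- `h_{A,μ}(f, P) = limsup (1/n) H_μ(⋁_{j=1}^n f_0^{-a_j} P)`. -/
noncomputable def measSeqEntPart {X : Type*} [MeasurableSpace X] (μ : Measure X)
    (f : ℕ → X → X) (A : ℕ → ℕ) (P : Finset (Set X)) : EReal :=
  limsup (fun n : ℕ =>
    (((∑ u : Fin n → {s // s ∈ P},
        Real.negMulLog (μ (seqCell f A n (fun j => (u j : Set X)))).toReal) / n : ℝ) : EReal))
    atTop

/-- The measure-theoretic sequence entropy `h_{A,μ}(f)`. -/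
noncomputable def measSeqEnt {X : Type*} [MeasurableSpace X] (μ : Measure X)
    (f : ℕ → X → X) (A : ℕ → ℕ) : EReal :=
  ⨆ P : {P : Finset (Set X) // IsFinMeasPartition P}, measSeqEntPart μ f A P

/-- Covering dimension at most `d`: every finite open cover has a finite open refinement
of order at most `d + 1`. -/
def HasCovDimLE (X : Type*) [TopologicalSpace X] (d : ℕ) : Prop :=
  ∀ 𝒜 : Finset (Set X), IsFinOpenCover 𝒜 → ∃ ℬ : Finset (Set X), IsFinOpenCover ℬ ∧
    (∀ v ∈ ℬ, ∃ u ∈ 𝒜, v ⊆ u) ∧ ∀ x : X, ({v : Set X | v ∈ ℬ ∧ x ∈ v}).ncard ≤ d + 1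

/-- The induced nonautonomous system `f̂` on the space of Borel probability measures,
carrying the Lévy–Prokhorov (Prohorov) metric: `f̂ n μ = (f n)_* μ`. -/
noncomputable def inducedSys {X : Type*} [MeasurableSpace X] (f : ℕ → X → X)
    (hf : ∀ n, Measurable (f n)) :
    ℕ → LevyProkhorov (ProbabilityMeasure X) → LevyProkhorov (ProbabilityMeasure X) :=
  fun n μ => (LevyProkhorov.toMeasureEquiv (α := ProbabilityMeasure X)).symm
    (((LevyProkhorov.toMeasureEquiv (α := ProbabilityMeasure X)) μ).map (hf n).aemeasurable)

/-- Multi-sensitivity of a nonautonomous system. -/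
def MultiSensitive {X : Type*} [PseudoMetricSpace X] (f : ℕ → X → X) : Prop :=
  ∃ δ : ℝ, 0 < δ ∧ ∀ (k : ℕ) (V : Fin k → Set X),
    (∀ i, IsOpen (V i)) → (∀ i, (V i).Nonempty) →
      ∃ n : ℕ, 1 ≤ n ∧ ∀ i, δ < Metric.diam (nacomp f 0 n '' V i)

section Aux

variable {X : Type*} [MetricSpace X] [CompactSpace X] (f : ℕ → X → X) (A : ℕ → ℕ)

/-- The defining set of `coverN` is nonempty: the full join cover works. -/
lemma aux_coverSet_nonempty {Λ : Set X} (𝒜 : Finset (Set X)) (h𝒜 : IsFinOpenCover 𝒜) (n : ℕ) :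
    {m | ∃ S : Finset (Fin n → Set X), (∀ u ∈ S, ∀ j, u j ∈ 𝒜) ∧
      (Λ ⊆ ⋃ u ∈ S, seqCell f A n u) ∧ S.card = m}.Nonempty := by
  classical
  refine ⟨_, Fintype.piFinset (fun _ : Fin n => 𝒜), ?_, ?_, rfl⟩
  · intro u hu j; exact (Fintype.mem_piFinset.mp hu) j
  · intro x hx
    have h : ∀ j : Fin n, ∃ u ∈ 𝒜, nacomp f 0 (A j.1) x ∈ u := by
      intro j
      have : nacomp f 0 (A j.1) x ∈ ⋃₀ (𝒜 : Set (Set X)) := by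
        rw [h𝒜.2]; exact mem_univ _
      simpa [mem_sUnion] using this
    choose u hu hxu using h
    refine mem_iUnion₂.mpr ⟨u, Fintype.mem_piFinset.mpr hu, ?_⟩
    exact mem_iInter.mpr hxu

/-- Any `(n,ε,A)`-separated set injects into a minimal subcover of the join cover,
provided all elements of `𝒜` have diameter at most `ε`. -/
lemma aux_sepCard_le_coverN {Λ : Set X} {𝒜 : Finset (Set X)} (h𝒜 : IsFinOpenCover 𝒜)
    {ε : ℝ} (hdiam : ∀ u ∈ 𝒜, ∀ a ∈ u, ∀ b ∈ u, dist a b ≤ ε)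
    {n : ℕ} {E : Finset X} (hE : IsSepSet f A n ε Λ E) :
    E.card ≤ coverN f A n Λ 𝒜 := by
  classical
  obtain ⟨S, hS𝒜, hScov, hScard⟩ :=
    Nat.sInf_mem (aux_coverSet_nonempty f A (Λ := Λ) 𝒜 h𝒜 n)
  rw [coverN, ← hScard]
  have hmem : ∀ x : X, ∃ u : Fin n → Set X, x ∈ E → u ∈ S ∧ x ∈ seqCell f A n u := by
    intro x
    by_cases hx : x ∈ E
    · obtain ⟨u, hu, hxu⟩ := mem_iUnion₂.mp (hScov (hE.1 hx))
      exact ⟨u, fun _ => ⟨hu, hxu⟩⟩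
    · exact ⟨fun _ => ∅, fun h => absurd h hx⟩
  choose g hg using hmem
  refine Finset.card_le_card_of_injOn g (fun x hx => (hg x hx).1) ?_
  intro x hx y hy hxy
  by_contra hne
  obtain ⟨j, hj⟩ := hE.2 x hx y hy hne
  have hxj : nacomp f 0 (A j.1) x ∈ g x j := mem_iInter.mp (hg x hx).2 j
  have hyj : nacomp f 0 (A j.1) y ∈ g x j := by
    have := mem_iInter.mp (hg y hy).2 j
    rwa [hxy]
  have : dist (nacomp f 0 (A j.1) x) (nacomp f 0 (A j.1) y) ≤ ε :=
    hdiam _ (hS𝒜 _ (hg x hx).1 j) _ hxj _ hyj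
  exact absurd hj (not_lt.mpr this)

/-- A finite open cover by sets of diameter at most `ε`. -/
lemma aux_exists_ballCover {ε : ℝ} (hε : 0 < ε) :
    ∃ 𝒜 : Finset (Set X), IsFinOpenCover 𝒜 ∧ ∀ u ∈ 𝒜, ∀ a ∈ u, ∀ b ∈ u, dist a b ≤ ε := by
  classical
  obtain ⟨t, ht⟩ := (isCompact_univ (X := X)).elim_finite_subcover
      (fun x : X => Metric.ball x (ε / 2)) (fun _ => Metric.isOpen_ball)
      (fun x _ => mem_iUnion.mpr ⟨x, Metric.mem_ball_self (by linarith)⟩)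
  refine ⟨t.image (fun x => Metric.ball x (ε / 2)), ⟨?_, ?_⟩, ?_⟩
  · intro u hu
    obtain ⟨x, _, rfl⟩ := Finset.mem_image.mp hu
    exact Metric.isOpen_ball
  · apply eq_univ_of_univ_subset
    intro x hx
    obtain ⟨c, hc, hxc⟩ := mem_iUnion₂.mp (ht hx)
    exact ⟨Metric.ball c (ε / 2),
      Finset.mem_coe.mpr (Finset.mem_image_of_mem _ hc), hxc⟩
  · intro u hu a ha b hb
    obtain ⟨x, _, rfl⟩ := Finset.mem_image.mp hu
    have h1 := Metric.mem_ball.mp ha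
    have h2 := Metric.mem_ball.mp hb
    calc dist a b ≤ dist a x + dist x b := dist_triangle _ _ _
      _ ≤ ε := by rw [dist_comm x b] at *; linarith

/-- The separated-cardinality set for bounding `maxSep`. -/
lemma aux_sepSet_bddAbove {Λ : Set X} {ε : ℝ} (hε : 0 < ε) (n : ℕ) :
    BddAbove {m | ∃ E : Finset X, IsSepSet f A n ε Λ E ∧ E.card = m} := by
  obtain ⟨ℬ, hℬ, hdiam⟩ := aux_exists_ballCover (X := X) hε
  exact ⟨coverN f A n Λ ℬ, fun m ⟨E, hE, hc⟩ =>
    hc ▸ aux_sepCard_le_coverN f A hℬ hdiam hE⟩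

lemma aux_sepSet_nonempty {Λ : Set X} {ε : ℝ} (n : ℕ) :
    Set.Nonempty {m | ∃ E : Finset X, IsSepSet f A n ε Λ E ∧ E.card = m} :=
  ⟨0, ∅, ⟨by simp, by simp⟩, rfl⟩

lemma aux_one_le_maxSep {Λ : Set X} (hΛ : Λ.Nonempty) {ε : ℝ} (hε : 0 < ε) (n : ℕ) :
    1 ≤ maxSep f A n ε Λ := by
  obtain ⟨x₀, hx₀⟩ := hΛ
  refine le_csSup (aux_sepSet_bddAbove f A hε n) ⟨{x₀}, ⟨by simpa, ?_⟩, Finset.card_singleton x₀⟩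
  intro x hx y hy hne
  rw [Finset.mem_singleton] at hx hy
  exact absurd (hx.trans hy.symm) hne

lemma aux_maxSep_le_coverN {Λ : Set X} {𝒜 : Finset (Set X)} (h𝒜 : IsFinOpenCover 𝒜)
    {ε : ℝ} (hdiam : ∀ u ∈ 𝒜, ∀ a ∈ u, ∀ b ∈ u, dist a b ≤ ε) (n : ℕ) :
    maxSep f A n ε Λ ≤ coverN f A n Λ 𝒜 :=
  csSup_le (aux_sepSet_nonempty f A n)
    (fun m ⟨E, hE, hc⟩ => hc ▸ aux_sepCard_le_coverN f A h𝒜 hdiam hE)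

lemma aux_one_le_coverN {Λ : Set X} (hΛ : Λ.Nonempty) {𝒜 : Finset (Set X)}
    (h𝒜 : IsFinOpenCover 𝒜) (n : ℕ) : 1 ≤ coverN f A n Λ 𝒜 := by
  obtain ⟨S, _, hScov, hScard⟩ :=
    Nat.sInf_mem (aux_coverSet_nonempty f A (Λ := Λ) 𝒜 h𝒜 n)
  rw [coverN, ← hScard, Nat.one_le_iff_ne_zero, Ne, Finset.card_eq_zero]
  rintro rfl
  obtain ⟨x₀, hx₀⟩ := hΛ
  simpa using hScov hx₀

lemma aux_coverN_le_maxSep {Λ : Set X} (hΛ : Λ.Nonempty) {𝒜 : Finset (Set X)}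
    {δ ε : ℝ} (hε : 0 < ε) (hεδ : ε < δ)
    (hL : ∀ x : X, ∃ u ∈ 𝒜, Metric.ball x δ ⊆ u) (n : ℕ) :
    coverN f A n Λ 𝒜 ≤ maxSep f A n ε Λ := by
  classical
  have hbdd := aux_sepSet_bddAbove f A (Λ := Λ) hε n
  -- a maximal separated set
  obtain ⟨E, hE, hEcard⟩ := Nat.sSup_mem (aux_sepSet_nonempty f A n) hbdd
  -- it is spanning
  have hspan : ∀ x ∈ Λ, ∃ y ∈ E, ∀ j : Fin n,
      dist (nacomp f 0 (A j.1) x) (nacomp f 0 (A j.1) y) ≤ ε := by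
    by_contra hcon
    push_neg at hcon
    obtain ⟨x, hxΛ, hx⟩ := hcon
    have hxE : x ∉ E := by
      intro hxE
      obtain ⟨j, hj⟩ := hx x hxE
      simp at hj
      linarith
    have hsep : IsSepSet f A n ε Λ (insert x E) := by
      refine ⟨?_, ?_⟩
      · rw [Finset.coe_insert]
        exact insert_subset hxΛ hE.1
      · intro a ha b hb hab
        rcases Finset.mem_insert.mp ha with ha' | ha'
        · rcases Finset.mem_insert.mp hb with hb' | hb'
          · exact absurd (ha'.trans hb'.symm) hab
          · subst ha'; exact hx b hb'
        · rcases Finset.mem_insert.mp hb with hb' | hb'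
          · subst hb'
            obtain ⟨j, hj⟩ := hx a ha'
            exact ⟨j, by rwa [dist_comm]⟩
          · exact hE.2 a ha' b hb' hab
    have hle : (insert x E).card ≤ maxSep f A n ε Λ :=
      le_csSup hbdd ⟨insert x E, hsep, rfl⟩
    rw [Finset.card_insert_of_notMem hxE, hEcard] at hle
    exact absurd hle (by simp [maxSep])
  -- build a subcover indexed by E
  choose U hU𝒜 hUball using hL
  set v : X → (Fin n → Set X) := fun z j => U (nacomp f 0 (A j.1) z) with hv
  refine le_trans (Nat.sInf_le ⟨E.image v, ?_, ?_, rfl⟩)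
    (le_trans Finset.card_image_le (le_of_eq hEcard))
  · intro u hu j
    obtain ⟨z, _, rfl⟩ := Finset.mem_image.mp hu
    exact hU𝒜 _
  · intro x hx
    obtain ⟨y, hyE, hy⟩ := hspan x hx
    refine mem_iUnion₂.mpr ⟨v y, Finset.mem_image_of_mem v hyE, mem_iInter.mpr fun j => ?_⟩
    exact hUball _ (Metric.mem_ball.mpr (lt_of_le_of_lt (hy j) hεδ))

lemma aux_limsup_mono {a b : ℕ → ℕ} (h : ∀ n, a n ≤ b n) (ha : ∀ n, 1 ≤ a n) :
    limsup (fun n : ℕ => ((Real.log (a n) / n : ℝ) : EReal)) atTop ≤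
    limsup (fun n : ℕ => ((Real.log (b n) / n : ℝ) : EReal)) atTop := by
  refine limsup_le_limsup (Eventually.of_forall fun n => ?_) isCobounded_le_of_bot
    isBounded_le_of_top
  have h1 : Real.log (a n) ≤ Real.log (b n) :=
    Real.log_le_log (by exact_mod_cast ha n) (by exact_mod_cast h n)
  have h2 : (Real.log (a n) / n : ℝ) ≤ Real.log (b n) / n := by
    rcases Nat.eq_zero_or_pos n with rfl | hn
    · simp
    · have hn' : (0 : ℝ) < n := by exact_mod_cast hn
      exact (div_le_div_iff_of_pos_right hn').mpr h1
  exact EReal.coe_le_coe_iff.mpr h2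

end Aux

/-- The open-cover and separated-set definitions of topological sequence entropy agree. -/
theorem coverEnt_eq_sepEnt {X : Type*} [MetricSpace X] [CompactSpace X]
    (f : ℕ → X → X) (hf : ∀ n, Continuous (f n)) (Λ : Set X) (hΛ : Λ.Nonempty)
    (A : ℕ → ℕ) (hA : StrictMono A) :
    coverEnt f A Λ = sepEnt f A Λ := by
  apply le_antisymm
  · -- coverEnt ≤ sepEnt, via the Lebesgue number lemma
    apply iSup_le
    rintro ⟨𝒜, h𝒜⟩
    obtain ⟨δ, hδ, hL⟩ := lebesgue_number_lemma_of_metric_sUnion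
      (isCompact_univ (X := X)) (c := (𝒜 : Set (Set X))) h𝒜.1 (by rw [h𝒜.2])
    have hL' : ∀ x : X, ∃ u ∈ 𝒜, Metric.ball x δ ⊆ u := fun x => by
      obtain ⟨u, hu, hsub⟩ := hL x (mem_univ x)
      exact ⟨u, hu, hsub⟩
    have hε : (0 : ℝ) < δ / 2 := by linarith
    have hεδ : δ / 2 < δ := by linarith
    calc coverEntOf f A Λ 𝒜
        ≤ limsup (fun n : ℕ =>
            ((Real.log (maxSep f A n (δ / 2) Λ) / n : ℝ) : EReal)) atTop :=
          aux_limsup_mono (fun n => aux_coverN_le_maxSep f A hΛ hε hεδ hL' n)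
            (fun n => aux_one_le_coverN f A hΛ h𝒜 n)
      _ ≤ sepEnt f A Λ := le_iSup_of_le ⟨δ / 2, hε⟩ le_rfl
  · -- sepEnt ≤ coverEnt, via covers by small balls
    apply iSup_le
    rintro ⟨ε, hε⟩
    obtain ⟨𝒜, h𝒜, hdiam⟩ := aux_exists_ballCover (X := X) hε
    calc limsup (fun n : ℕ =>
            ((Real.log (maxSep f A n ε Λ) / n : ℝ) : EReal)) atTop
        ≤ coverEntOf f A Λ 𝒜 :=
          aux_limsup_mono (fun n => aux_maxSep_le_coverN f A h𝒜 hdiam n)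
            (fun n => aux_one_le_maxSep f A hΛ hε n)
      _ ≤ coverEnt f A Λ := le_iSup_of_le ⟨𝒜, h𝒜⟩ le_rfl
end

section
/- Let X be a compact metric space, f_{0,∞} a sequence of continuous self-maps, A an increasing sequence of nonnegative integers, and {α_n} a sequence of finite open covers of X whose diameters d(α_n) tend to 0. Then lim_{n→∞} h_A(f_{0,∞}, α_n) = h_A(f_{0,∞}) (with the convention that if h_A(f_{0,∞}) = ∞ then h_A(f_{0,∞}, α_n) → ∞). -/
open Filter Set MeasureTheory

section AuxEnt

variable {X : Type*}

/-- For a finite open cover, the defining set of `coverN` is nonempty. -/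
lemma coverN_set_nonempty [TopologicalSpace X] (f : ℕ → X → X) (A : ℕ → ℕ) (n : ℕ)
    (𝒜 : Finset (Set X)) (h𝒜 : IsFinOpenCover 𝒜) :
    ∃ S : Finset (Fin n → Set X), (∀ u ∈ S, ∀ j, u j ∈ 𝒜) ∧
      ((univ : Set X) ⊆ ⋃ u ∈ S, seqCell f A n u) := by
  classical
  refine ⟨Fintype.piFinset fun _ => 𝒜, fun u hu j => (Fintype.mem_piFinset.1 hu) j, ?_⟩
  intro x _
  have hx : ∀ j : Fin n, ∃ u ∈ 𝒜, nacomp f 0 (A j.1) x ∈ u := by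
    intro j
    have : nacomp f 0 (A j.1) x ∈ ⋃₀ (↑𝒜 : Set (Set X)) := by rw [h𝒜.2]; trivial
    simpa using this
  choose u hu hxu using hx
  exact mem_iUnion₂.2 ⟨u, Fintype.mem_piFinset.2 hu, mem_iInter.2 fun j => hxu j⟩

/-- Monotonicity of `coverN` under refinement. -/
lemma coverN_le_of_refines [TopologicalSpace X] (f : ℕ → X → X) (A : ℕ → ℕ) (n : ℕ)
    (α β : Finset (Set X)) (hα : IsFinOpenCover α) (href : ∀ u ∈ α, ∃ v ∈ β, u ⊆ v) :
    coverN f A n univ β ≤ coverN f A n univ α := by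
  classical
  obtain ⟨S, hS1, hS2⟩ := coverN_set_nonempty f A n α hα
  have hne : {m | ∃ S : Finset (Fin n → Set X), (∀ u ∈ S, ∀ j, u j ∈ α) ∧
      ((univ : Set X) ⊆ ⋃ u ∈ S, seqCell f A n u) ∧ S.card = m}.Nonempty :=
    ⟨S.card, S, hS1, hS2, rfl⟩
  obtain ⟨T, hT1, hT2, hT3⟩ := Nat.sInf_mem hne
  choose v hv hvsub using href
  set φ : (Fin n → Set X) → (Fin n → Set X) :=
    fun u j => if h : u j ∈ α then v (u j) h else u j with hφ
  have hmem : coverN f A n univ β ≤ (T.image φ).card := by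
    apply Nat.sInf_le
    refine ⟨T.image φ, ?_, ?_, rfl⟩
    · intro w hw j
      obtain ⟨u, hu, rfl⟩ := Finset.mem_image.1 hw
      have h : u j ∈ α := hT1 u hu j
      simp only [hφ, dif_pos h]
      exact hv (u j) h
    · intro x hx
      obtain ⟨u, hu, hxu⟩ := mem_iUnion₂.1 (hT2 hx)
      refine mem_iUnion₂.2 ⟨φ u, Finset.mem_image_of_mem φ hu, mem_iInter.2 fun j => ?_⟩
      have h : u j ∈ α := hT1 u hu j
      have hx' : nacomp f 0 (A j.1) x ∈ u j := mem_iInter.1 hxu j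
      simp only [hφ, dif_pos h]
      exact hvsub (u j) h hx'
  calc coverN f A n univ β ≤ (T.image φ).card := hmem
    _ ≤ T.card := Finset.card_image_le
    _ = coverN f A n univ α := hT3

/-- Monotonicity of `coverEntOf` under refinement. -/
lemma coverEntOf_le_of_refines [TopologicalSpace X] (f : ℕ → X → X) (A : ℕ → ℕ)
    (α β : Finset (Set X)) (hα : IsFinOpenCover α) (href : ∀ u ∈ α, ∃ v ∈ β, u ⊆ v) :
    coverEntOf f A univ β ≤ coverEntOf f A univ α := by
  refine limsup_le_limsup (Eventually.of_forall fun n => ?_)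
  have h := coverN_le_of_refines f A n α β hα href
  rw [EReal.coe_le_coe_iff]
  rcases Nat.eq_zero_or_pos (coverN f A n univ β) with h0 | hpos
  · rw [h0]
    simp only [Nat.cast_zero, Real.log_zero, zero_div]
    exact div_nonneg (Real.log_natCast_nonneg _) (Nat.cast_nonneg n)
  · have hlog : Real.log (coverN f A n univ β) ≤ Real.log (coverN f A n univ α) :=
      Real.log_le_log (by exact_mod_cast hpos) (by exact_mod_cast h)
    exact div_le_div_of_nonneg_right hlog (Nat.cast_nonneg n)

lemma coverN_eq_zero_of_isEmpty [TopologicalSpace X] [IsEmpty X] (f : ℕ → X → X) (A : ℕ → ℕ)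
    (n : ℕ) (𝒜 : Finset (Set X)) : coverN f A n univ 𝒜 = 0 := by
  refine Nat.le_zero.1 (Nat.sInf_le ?_)
  refine ⟨∅, by simp, ?_, Finset.card_empty⟩
  rw [Set.univ_eq_empty_iff.2 ‹IsEmpty X›]
  exact empty_subset _

lemma coverEntOf_eq_zero_of_isEmpty [TopologicalSpace X] [IsEmpty X] (f : ℕ → X → X)
    (A : ℕ → ℕ) (𝒜 : Finset (Set X)) : coverEntOf f A univ 𝒜 = 0 := by
  have : (fun n : ℕ => ((Real.log (coverN f A n univ 𝒜) / n : ℝ) : EReal)) =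
      fun _ : ℕ => (0 : EReal) := by
    funext n
    rw [coverN_eq_zero_of_isEmpty]
    norm_num
  rw [coverEntOf, this, limsup_const]

end AuxEnt

/-- If `α n` are finite open covers with diameters tending to `0`, then
`h_A(f, α n) → h_A(f)` (in `EReal`, so the infinite case is included). -/
theorem tendsto_coverEntOf {X : Type*} [MetricSpace X] [CompactSpace X]
    (f : ℕ → X → X) (hf : ∀ n, Continuous (f n)) (A : ℕ → ℕ) (hA : StrictMono A)
    (α : ℕ → Finset (Set X)) (hα : ∀ n, IsFinOpenCover (α n))
    (hdiam : Tendsto (fun n => (α n).sup (fun u => EMetric.diam u)) atTop (nhds 0)) :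
    Tendsto (fun n => coverEntOf f A univ (α n)) atTop (nhds (coverEnt f A univ)) := by
  classical
  have hub : ∀ n, coverEntOf f A univ (α n) ≤ coverEnt f A univ := fun n =>
    le_iSup (fun 𝒜 : {𝒜 : Finset (Set X) // IsFinOpenCover 𝒜} => coverEntOf f A univ ↑𝒜)
      ⟨α n, hα n⟩
  have hlimsup : limsup (fun n => coverEntOf f A univ (α n)) atTop ≤ coverEnt f A univ :=
    limsup_le_of_le (by isBoundedDefault) (Eventually.of_forall hub)
  have hliminf : coverEnt f A univ ≤ liminf (fun n => coverEntOf f A univ (α n)) atTop := by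
    refine iSup_le fun p => ?_
    obtain ⟨β, hβ⟩ := p
    refine le_liminf_of_le (by isBoundedDefault) ?_
    by_cases hXe : IsEmpty X
    · refine Eventually.of_forall fun n => ?_
      rw [coverEntOf_eq_zero_of_isEmpty, coverEntOf_eq_zero_of_isEmpty]
    · have hXne : Nonempty X := not_isEmpty_iff.1 hXe
      -- β is nonempty
      obtain ⟨x₀⟩ := hXne
      have hx₀ : x₀ ∈ ⋃₀ (↑β : Set (Set X)) := by rw [hβ.2]; trivial
      obtain ⟨v₀, hv₀, -⟩ := hx₀
      -- Lebesgue number for β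
      have hcov : (univ : Set X) ⊆ ⋃ v : {v // v ∈ β}, (v : Set X) := by
        intro x _
        have hx : x ∈ ⋃₀ (↑β : Set (Set X)) := by rw [hβ.2]; trivial
        obtain ⟨v, hv, hxv⟩ := hx
        exact mem_iUnion.2 ⟨⟨v, hv⟩, hxv⟩
      obtain ⟨δ, hδ, hball⟩ := lebesgue_number_lemma_of_metric isCompact_univ
        (fun v : {v // v ∈ β} => hβ.1 v v.2) hcov
      have hev : ∀ᶠ n in atTop,
          (α n).sup (fun u => EMetric.diam u) < ENNReal.ofReal δ := by
        exact hdiam.eventually_lt_const (ENNReal.ofReal_pos.2 hδ)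
      refine hev.mono fun n hn => ?_
      refine coverEntOf_le_of_refines f A (α n) β (hα n) fun u hu => ?_
      rcases Set.eq_empty_or_nonempty u with rfl | ⟨x, hx⟩
      · exact ⟨v₀, hv₀, empty_subset _⟩
      · obtain ⟨v, hv⟩ := hball x trivial
        refine ⟨↑v, v.2, fun y hy => hv ?_⟩
        have hd : EMetric.diam u < ENNReal.ofReal δ :=
          lt_of_le_of_lt (Finset.le_sup hu) hn
        have := lt_of_le_of_lt (EMetric.edist_le_diam_of_mem hy hx) hd
        exact Metric.mem_ball.2 (edist_lt_ofReal.1 this)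
  exact tendsto_of_le_liminf_of_limsup_le hliminf hlimsup
end

section
/- Suppose the nonautonomous system (X, f_{0,∞}) is topologically {π_i}-semiconjugate to (Y, g_{0,∞}), where the semiconjugating maps satisfy {π_i}_{i≥0} ⊂ {φ_1,…,φ_k} for some finite set of maps, and each fibre φ_j^{-1}(y) (y ∈ Y, 1 ≤ j ≤ k) has at most n points. Then for any increasing sequence A of nonnegative integers, h_A(g_{0,∞}) ≤ h_A(f_{0,∞}) ≤ h_A(g_{0,∞}) + log(nk). -/
open Filter Set MeasureTheory

section AuxLemmas

open Metric Topology

variable {X Y : Type*}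

private lemma natLog_mono {a b : ℕ} (h : a ≤ b) : Real.log a ≤ Real.log b := by
  rcases Nat.eq_zero_or_pos a with rfl | ha
  · rcases Nat.eq_zero_or_pos b with rfl | hb
    · exact le_rfl
    · simp only [Nat.cast_zero, Real.log_zero]
      exact Real.log_nonneg (by exact_mod_cast hb)
  · exact Real.log_le_log (by exact_mod_cast ha) (by exact_mod_cast h)

private lemma nacomp_zero_succ (f : ℕ → X → X) (m : ℕ) (x : X) :
    nacomp f 0 (m + 1) x = f m (nacomp f 0 m x) := by
  show (f (0 + m) ∘ nacomp f 0 m) x = _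
  simp [Nat.zero_add]

private lemma semiconj_nacomp (f : ℕ → X → X) (g : ℕ → Y → Y) (π : ℕ → X → Y)
    (hsemi : ∀ i, (π (i + 1)) ∘ f i = g i ∘ π i) (m : ℕ) (x : X) :
    π m (nacomp f 0 m x) = nacomp g 0 m (π 0 x) := by
  induction m with
  | zero => rfl
  | succ m ih =>
    rw [nacomp_zero_succ, nacomp_zero_succ, ← ih]
    exact congrFun (hsemi m) (nacomp f 0 m x)

private lemma zero_mem_sepCards [PseudoMetricSpace X] (f : ℕ → X → X) (A : ℕ → ℕ) (m : ℕ)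
    (ε : ℝ) (Λ : Set X) :
    0 ∈ {c | ∃ E : Finset X, IsSepSet f A m ε Λ E ∧ E.card = c} :=
  ⟨∅, ⟨by simp, by simp⟩, rfl⟩

private lemma bddAbove_sepCards [PseudoMetricSpace X] [CompactSpace X] (f : ℕ → X → X)
    (A : ℕ → ℕ) (m : ℕ) {ε : ℝ} (hε : 0 < ε) (Λ : Set X) :
    BddAbove {c | ∃ E : Finset X, IsSepSet f A m ε Λ E ∧ E.card = c} := by
  classical
  obtain ⟨t, htf, htc⟩ := totallyBounded_iff.mp
    (isCompact_univ.totallyBounded : TotallyBounded (univ : Set (Fin m → X))) (ε / 2)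
    (by linarith)
  refine ⟨htf.toFinset.card, ?_⟩
  rintro c ⟨E, ⟨-, hsep⟩, rfl⟩
  set Ψ : X → (Fin m → X) := fun x j => nacomp f 0 (A j) x with hΨ
  have hcen : ∀ x : X, ∃ y, y ∈ t ∧ Ψ x ∈ ball y (ε / 2) := by
    intro x
    have := htc (mem_univ (Ψ x))
    simpa using this
  choose cen hcent hcball using hcen
  refine Finset.card_le_card_of_injOn (fun x => cen x)
    (fun x _ => htf.mem_toFinset.2 (hcent x)) ?_
  intro x hx x' hx' hcc
  by_contra hne
  obtain ⟨j, hj⟩ := hsep x (by simpa using hx) x' (by simpa using hx') hne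
  have hcc' : cen x = cen x' := hcc
  have h1 : dist (Ψ x) (Ψ x') < ε := by
    have b1 : dist (Ψ x) (cen x) < ε / 2 := mem_ball.mp (hcball x)
    have b2 : dist (Ψ x') (cen x') < ε / 2 := mem_ball.mp (hcball x')
    have := dist_triangle (Ψ x) (cen x') (Ψ x')
    rw [hcc'] at b1
    rw [dist_comm (Ψ x') (cen x')] at b2
    linarith
  have h2 : dist (Ψ x j) (Ψ x' j) ≤ dist (Ψ x) (Ψ x') := dist_le_pi_dist (Ψ x) (Ψ x') j
  have h3 : ε < dist (Ψ x j) (Ψ x' j) := hj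
  linarith

/-- Existence of a maximal-cardinality separated set, together with its spanning property. -/
private lemma exists_maxSep_span [PseudoMetricSpace Y] [CompactSpace Y] (g : ℕ → Y → Y)
    (A : ℕ → ℕ) (m : ℕ) {δ : ℝ} (hδ : 0 < δ) :
    ∃ D : Finset Y, IsSepSet g A m δ (univ : Set Y) D ∧ D.card = maxSep g A m δ univ ∧
      ∀ y : Y, ∃ d ∈ D, ∀ j : Fin m,
        dist (nacomp g 0 (A j) y) (nacomp g 0 (A j) d) ≤ δ := by
  classical
  have hne : {c | ∃ E : Finset Y, IsSepSet g A m δ (univ : Set Y) E ∧ E.card = c}.Nonempty :=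
    ⟨0, zero_mem_sepCards g A m δ univ⟩
  have hbdd := bddAbove_sepCards g A m hδ (univ : Set Y)
  obtain ⟨D, hD, hDcard0⟩ := Nat.sSup_mem hne hbdd
  have hDcard : D.card = maxSep g A m δ univ := hDcard0
  refine ⟨D, hD, hDcard, ?_⟩
  intro y
  by_contra hcon
  push_neg at hcon
  have hyD : y ∉ D := by
    intro hy
    obtain ⟨j, hj⟩ := hcon y hy
    simp at hj
    linarith
  have hins : IsSepSet g A m δ (univ : Set Y) (insert y D) := by
    refine ⟨subset_univ _, ?_⟩
    intro a ha b hb hne'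
    rcases Finset.mem_insert.mp ha with rfl | haD
    · rcases Finset.mem_insert.mp hb with rfl | hbD
      · exact absurd rfl hne'
      · exact hcon b hbD
    · rcases Finset.mem_insert.mp hb with rfl | hbD
      · obtain ⟨j, hj⟩ := hcon a haD
        exact ⟨j, by rwa [dist_comm] at hj⟩
      · exact hD.2 a haD b hbD hne'
  have : (insert y D).card ≤ maxSep g A m δ univ :=
    le_csSup hbdd ⟨insert y D, hins, rfl⟩
  rw [Finset.card_insert_of_notMem hyD, hDcard] at this
  omega

/-- A maximal `r`-separated subset of a finite set is an `r`-net for it. -/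
private lemma exists_finset_net [PseudoMetricSpace X] (T : Finset X) {r : ℝ} (hr : 0 < r) :
    ∃ M : Finset X, M ⊆ T ∧ (∀ x ∈ M, ∀ y ∈ M, x ≠ y → r < dist x y) ∧
      ∀ p ∈ T, ∃ q ∈ M, dist p q ≤ r := by
  classical
  set s := T.powerset.filter (fun M => ∀ x ∈ M, ∀ y ∈ M, x ≠ y → r < dist x y) with hs
  have hsne : s.Nonempty := ⟨∅, by simp [hs]⟩
  obtain ⟨M, hMs, hMmax⟩ := s.exists_max_image Finset.card hsne
  rw [hs, Finset.mem_filter, Finset.mem_powerset] at hMs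
  refine ⟨M, hMs.1, hMs.2, ?_⟩
  intro p hp
  by_contra hcon
  push_neg at hcon
  have hpM : p ∉ M := by
    intro h
    have := hcon p h
    simp at this
    linarith
  have hins : insert p M ∈ s := by
    rw [hs, Finset.mem_filter, Finset.mem_powerset]
    refine ⟨Finset.insert_subset hp hMs.1, ?_⟩
    intro a ha b hb hne'
    rcases Finset.mem_insert.mp ha with rfl | haM
    · rcases Finset.mem_insert.mp hb with rfl | hbM
      · exact absurd rfl hne'
      · exact hcon b hbM
    · rcases Finset.mem_insert.mp hb with rfl | hbM
      · have := hcon a haM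
        rwa [dist_comm] at this
      · exact hMs.2 a haM b hbM hne'
  have := hMmax _ hins
  rw [Finset.card_insert_of_notMem hpM] at this
  omega

/-- Uniform fibre-cluster bound: if a continuous map on a compact metric space has all
fibres of cardinality at most `n`, then for every `ε > 0` there is `δ > 0` such that every
`ε`-separated set mapped into a `δ`-ball has at most `n` elements. -/
private lemma fiber_cluster_bound [MetricSpace X] [CompactSpace X] [MetricSpace Y]
    (φ : X → Y) (hc : Continuous φ) (n : ℕ)
    (hfib : ∀ y, ∃ F : Finset X, φ ⁻¹' {y} ⊆ ↑F ∧ F.card ≤ n) {ε : ℝ} (hε : 0 < ε) :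
    ∃ δ > 0, ∀ (y : Y) (S : Finset X), (∀ x ∈ S, φ x ∈ closedBall y δ) →
      (∀ x ∈ S, ∀ x' ∈ S, x ≠ x' → ε < dist x x') → S.card ≤ n := by
  classical
  by_contra hcon
  push_neg at hcon
  have key : ∀ m : ℕ, ∃ u : Fin (n + 1) → X, Function.Injective u ∧
      (∀ i i', i ≠ i' → ε < dist (u i) (u i')) ∧
      ∃ y, ∀ i, dist (φ (u i)) y ≤ 1 / (m + 1) := by
    intro m
    obtain ⟨y, S, hball, hsep, hcard⟩ := hcon (1 / (m + 1)) (by positivity)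
    obtain ⟨t, hts, htc⟩ := Finset.exists_subset_card_eq (s := S) (n := n + 1) hcard
    have huinj : Function.Injective
        (fun i : Fin (n + 1) => (t.equivFin.symm (Fin.cast htc.symm i) : X)) := by
      intro i i' h
      have := Subtype.coe_injective h
      have := t.equivFin.symm.injective this
      exact Fin.cast_injective _ this
    refine ⟨_, huinj, ?_, y, ?_⟩
    · intro i i' hne
      have h1 : (t.equivFin.symm (Fin.cast htc.symm i) : X) ∈ S :=
        hts (t.equivFin.symm (Fin.cast htc.symm i)).2
      have h2 : (t.equivFin.symm (Fin.cast htc.symm i') : X) ∈ S :=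
        hts (t.equivFin.symm (Fin.cast htc.symm i')).2
      exact hsep _ h1 _ h2 (fun h => hne (huinj h))
    · intro i
      have h1 : (t.equivFin.symm (Fin.cast htc.symm i) : X) ∈ S :=
        hts (t.equivFin.symm (Fin.cast htc.symm i)).2
      exact mem_closedBall.mp (hball _ h1)
  choose u huinj husep y hball using key
  obtain ⟨x, σ, hσ, hconv⟩ := CompactSpace.tendsto_subseq u
  have hcoord : ∀ i : Fin (n + 1),
      Tendsto (fun m => u (σ m) i) atTop (𝓝 (x i)) := fun i =>
    ((continuous_apply i).tendsto x).comp hconv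
  have heq : ∀ i i' : Fin (n + 1), φ (x i) = φ (x i') := by
    intro i i'
    have hd : Tendsto (fun m => dist (φ (u (σ m) i)) (φ (u (σ m) i'))) atTop
        (𝓝 (dist (φ (x i)) (φ (x i')))) :=
      ((hc.tendsto _).comp (hcoord i)).dist ((hc.tendsto _).comp (hcoord i'))
    have hg : Tendsto (fun m : ℕ => 1 / ((σ m : ℝ) + 1) + 1 / ((σ m : ℝ) + 1)) atTop
        (𝓝 (0 + 0)) := by
      have h1 : Tendsto (fun m : ℕ => 1 / ((σ m : ℝ) + 1)) atTop (𝓝 0) :=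
        tendsto_one_div_add_atTop_nhds_zero_nat.comp hσ.tendsto_atTop
      exact h1.add h1
    rw [add_zero] at hg
    have hle : ∀ m, dist (φ (u (σ m) i)) (φ (u (σ m) i')) ≤
        1 / ((σ m : ℝ) + 1) + 1 / ((σ m : ℝ) + 1) := by
      intro m
      have t1 := hball (σ m) i
      have t2 := hball (σ m) i'
      have := dist_triangle (φ (u (σ m) i)) (y (σ m)) (φ (u (σ m) i'))
      rw [dist_comm (y (σ m))] at this
      linarith
    have h0 : dist (φ (x i)) (φ (x i')) ≤ 0 := le_of_tendsto_of_tendsto' hd hg hle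
    exact dist_le_zero.mp h0
  have hxsep : ∀ i i', i ≠ i' → ε ≤ dist (x i) (x i') := by
    intro i i' hne
    have hd : Tendsto (fun m => dist (u (σ m) i) (u (σ m) i')) atTop
        (𝓝 (dist (x i) (x i'))) := (hcoord i).dist (hcoord i')
    exact ge_of_tendsto' hd (fun m => (husep (σ m) i i' hne).le)
  have hxinj : Function.Injective x := by
    intro i i' h
    by_contra hne
    have := hxsep i i' hne
    rw [h, dist_self] at this
    linarith
  obtain ⟨F, hF, hFcard⟩ := hfib (φ (x 0))
  have hmem : ∀ i, x i ∈ F := by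
    intro i
    exact hF (by simp [Set.mem_preimage, heq i 0])
  have : (Finset.univ : Finset (Fin (n + 1))).card ≤ F.card :=
    Finset.card_le_card_of_injOn x (fun i _ => hmem i) (hxinj.injOn)
  simp [Finset.card_univ] at this
  omega

end AuxLemmas

/-- Sequence-entropy estimate for a finite-to-one equi-semiconjugacy whose conjugating
maps come from a finite family `φ` with fibres of cardinality at most `n`. -/
theorem sepEnt_finite_to_one_extension {X Y : Type*} [MetricSpace X] [CompactSpace X]
    [MetricSpace Y] [CompactSpace Y]
    (f : ℕ → X → X) (hf : ∀ i, Continuous (f i))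
    (g : ℕ → Y → Y) (hg : ∀ i, Continuous (g i))
    (π : ℕ → X → Y) (hπc : ∀ i, Continuous (π i)) (hπs : ∀ i, Function.Surjective (π i))
    (hπe : Equicontinuous π) (hsemi : ∀ i, (π (i + 1)) ∘ f i = g i ∘ π i)
    (k : ℕ) (hk : 1 ≤ k) (φ : Fin k → X → Y) (hπφ : ∀ i, ∃ j, π i = φ j)
    (n : ℕ) (hn : 1 ≤ n)
    (hfib : ∀ (j : Fin k) (y : Y), ∃ F : Finset X, φ j ⁻¹' {y} ⊆ ↑F ∧ F.card ≤ n)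
    (A : ℕ → ℕ) (hA : StrictMono A) :
    sepEnt g A univ ≤ sepEnt f A univ ∧
      sepEnt f A univ ≤ sepEnt g A univ + (Real.log (n * k) : EReal) := by
  classical
  have hnk1 : (1:ℝ) ≤ (n:ℝ) * (k:ℝ) := by
    have h := Nat.mul_le_mul hn hk
    have : (1:ℝ) ≤ ((n * k : ℕ) : ℝ) := by exact_mod_cast h
    push_cast at this
    linarith
  have huec : UniformEquicontinuous π := CompactSpace.uniformEquicontinuous_of_equicontinuous hπe
  constructor
  · -- `h_A(g) ≤ h_A(f)`
    refine iSup_le ?_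
    rintro ⟨ε, hε⟩
    obtain ⟨δ, hδ, hd⟩ := Metric.uniformEquicontinuous_iff.mp huec ε hε
    have hmax : ∀ m : ℕ, maxSep g A m ε univ ≤ maxSep f A m (δ/2) univ := by
      intro m
      refine csSup_le ⟨0, zero_mem_sepCards g A m ε univ⟩ ?_
      rintro c ⟨E, ⟨-, hEsep⟩, rfl⟩
      set s : Y → X := Function.surjInv (hπs 0) with hs
      have hsinj : Function.Injective s := Function.injective_surjInv (hπs 0)
      have hsec : ∀ y, π 0 (s y) = y := fun y => Function.surjInv_eq (hπs 0) y
      have hsep' : IsSepSet f A m (δ/2) univ (E.image s) := by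
        refine ⟨subset_univ _, ?_⟩
        intro x hx x' hx' hne
        obtain ⟨y, hy, rfl⟩ := Finset.mem_image.mp hx
        obtain ⟨y', hy', rfl⟩ := Finset.mem_image.mp hx'
        have hyne : y ≠ y' := fun h => hne (by rw [h])
        obtain ⟨j, hj⟩ := hEsep y hy y' hy' hyne
        refine ⟨j, ?_⟩
        by_contra hle
        push_neg at hle
        have hlt : dist (nacomp f 0 (A j) (s y)) (nacomp f 0 (A j) (s y')) < δ := by linarith
        have hcontra := hd _ _ hlt (A j)
        rw [semiconj_nacomp f g π hsemi (A j) (s y),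
          semiconj_nacomp f g π hsemi (A j) (s y'), hsec y, hsec y'] at hcontra
        linarith
      have hcard : (E.image s).card = E.card := Finset.card_image_of_injective E hsinj
      exact le_csSup (bddAbove_sepCards f A m (by linarith) univ) ⟨E.image s, hsep', hcard⟩
    have hlog : ∀ m : ℕ, (Real.log (maxSep g A m ε univ) / m : ℝ) ≤
        Real.log (maxSep f A m (δ/2) univ) / m := by
      intro m
      rcases Nat.eq_zero_or_pos m with rfl | hm
      · simp
      · have hm' : (0:ℝ) < m := by exact_mod_cast hm
        exact (div_le_div_iff_of_pos_right hm').2 (natLog_mono (hmax m))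
    calc limsup (fun m : ℕ => ((Real.log (maxSep g A m ε univ) / m : ℝ) : EReal)) atTop
        ≤ limsup (fun m : ℕ =>
            ((Real.log (maxSep f A m (δ/2) univ) / m : ℝ) : EReal)) atTop :=
          Filter.limsup_le_limsup (Eventually.of_forall fun m =>
            EReal.coe_le_coe_iff.mpr (hlog m))
      _ ≤ sepEnt f A univ :=
          le_iSup (fun p : {ε : ℝ // 0 < ε} =>
            limsup (fun m : ℕ =>
              ((Real.log (maxSep f A m p univ) / m : ℝ) : EReal)) atTop)
            ⟨δ/2, by linarith⟩
  · -- `h_A(f) ≤ h_A(g) + log (n k)`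
    refine iSup_le ?_
    rintro ⟨ε, hε⟩
    have hδj : ∀ j : Fin k, ∃ δ, 0 < δ ∧ (Continuous (φ j) →
        ∀ (y : Y) (S : Finset X), (∀ x ∈ S, φ j x ∈ Metric.closedBall y δ) →
        (∀ x ∈ S, ∀ x' ∈ S, x ≠ x' → ε/2 < dist x x') → S.card ≤ n) := by
      intro j
      by_cases hcj : Continuous (φ j)
      · obtain ⟨δ, hδ, hp⟩ := fiber_cluster_bound (φ j) hcj n (hfib j) (half_pos hε)
        exact ⟨δ, hδ, fun _ => hp⟩
      · exact ⟨1, one_pos, fun h => absurd h hcj⟩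
    choose dlt hdltpos hdltp using hδj
    haveI : Nonempty (Fin k) := ⟨⟨0, hk⟩⟩
    set δ := Finset.univ.inf' Finset.univ_nonempty dlt with hδdef
    have hδpos : 0 < δ := by
      rw [hδdef, Finset.lt_inf'_iff]
      exact fun j _ => hdltpos j
    have hkey : ∀ (i : ℕ) (y : Y) (S : Finset X),
        (∀ x ∈ S, π i x ∈ Metric.closedBall y δ) →
        (∀ x ∈ S, ∀ x' ∈ S, x ≠ x' → ε/2 < dist x x') → S.card ≤ n := by
      intro i y S hball hsep
      obtain ⟨j, hj⟩ := hπφ i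
      have hcj : Continuous (φ j) := hj ▸ hπc i
      refine hdltp j hcj y S ?_ hsep
      intro x hx
      have h1 := hball x hx
      rw [hj] at h1
      exact Metric.closedBall_subset_closedBall
        (Finset.inf'_le dlt (Finset.mem_univ j)) h1
    have hcount : ∀ m : ℕ, maxSep f A m ε univ ≤ n ^ m * maxSep g A m δ univ := by
      intro m
      obtain ⟨D, hD, hDcard, hspan⟩ := exists_maxSep_span g A m hδpos
      refine csSup_le ⟨0, zero_mem_sepCards f A m ε univ⟩ ?_
      rintro c ⟨E, ⟨-, hEsep⟩, rfl⟩
      set cf : X → Y := fun x => (hspan (π 0 x)).choose with hcf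
      have hcfD : ∀ x, cf x ∈ D := fun x => (hspan (π 0 x)).choose_spec.1
      have hcfd : ∀ (x : X) (j : Fin m),
          dist (nacomp g 0 (A j) (π 0 x)) (nacomp g 0 (A j) (cf x)) ≤ δ :=
        fun x => (hspan (π 0 x)).choose_spec.2
      have hnets : ∀ (d : Y) (j : Fin m), ∃ M : Finset X,
          M ⊆ (E.filter (fun x => cf x = d)).image (nacomp f 0 (A j)) ∧
          (∀ x ∈ M, ∀ y ∈ M, x ≠ y → ε/2 < dist x y) ∧
          ∀ p ∈ (E.filter (fun x => cf x = d)).image (nacomp f 0 (A j)),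
            ∃ q ∈ M, dist p q ≤ ε/2 :=
        fun d j => exists_finset_net _ (half_pos hε)
      choose M hM1 hM2 hM3 using hnets
      have hMcard : ∀ (d : Y) (j : Fin m), (M d j).card ≤ n := by
        intro d j
        refine hkey (A j) (nacomp g 0 (A j) d) (M d j) ?_ (hM2 d j)
        intro p hp
        obtain ⟨x, hxE, rfl⟩ := Finset.mem_image.mp (hM1 d j hp)
        rw [Finset.mem_filter] at hxE
        rw [Metric.mem_closedBall, semiconj_nacomp f g π hsemi (A j) x]
        have h2 := hcfd x j
        rw [hxE.2] at h2
        exact h2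
      have hfiber : ∀ d ∈ D, (E.filter (fun x => cf x = d)).card ≤ n ^ m := by
        intro d hd
        have hnear : ∀ (x : X) (j : Fin m), ∃ q : X,
            x ∈ E.filter (fun x => cf x = d) →
              q ∈ M d j ∧ dist (nacomp f 0 (A j) x) q ≤ ε/2 := by
          intro x j
          by_cases hx : x ∈ E.filter (fun x => cf x = d)
          · obtain ⟨q, hq1, hq2⟩ := hM3 d j _ (Finset.mem_image_of_mem _ hx)
            exact ⟨q, fun _ => ⟨hq1, hq2⟩⟩
          · exact ⟨x, fun h => absurd h hx⟩
        choose Q hQ using hnear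
        calc (E.filter (fun x => cf x = d)).card
            ≤ (Fintype.piFinset (fun j : Fin m => M d j)).card := by
              refine Finset.card_le_card_of_injOn (fun x j => Q x j) ?_ ?_
              · intro x hx
                exact Fintype.mem_piFinset.mpr fun j => (hQ x j hx).1
              · intro x hx x' hx' heq
                by_contra hne
                rw [Finset.mem_coe, Finset.mem_filter] at hx hx'
                obtain ⟨j, hj⟩ := hEsep x hx.1 x' hx'.1 hne
                have e1 := (hQ x j (Finset.mem_filter.mpr hx)).2
                have e2 := (hQ x' j (Finset.mem_filter.mpr hx')).2
                have heqj : Q x j = Q x' j := congrFun heq j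
                rw [heqj] at e1
                have htri := dist_triangle (nacomp f 0 (A j) x) (Q x' j) (nacomp f 0 (A j) x')
                rw [dist_comm] at e2
                linarith
          _ ≤ n ^ m := by
              rw [Fintype.card_piFinset]
              calc ∏ j : Fin m, (M d j).card ≤ ∏ _j : Fin m, n :=
                    Finset.prod_le_prod' (fun j _ => hMcard d j)
                _ = n ^ m := by simp
      calc E.card = ∑ d ∈ D, (E.filter (fun x => cf x = d)).card :=
            Finset.card_eq_sum_card_fiberwise (fun x _ => hcfD x)
        _ ≤ ∑ _d ∈ D, n ^ m := Finset.sum_le_sum hfiber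
        _ = D.card * n ^ m := by rw [Finset.sum_const, smul_eq_mul]
        _ = n ^ m * maxSep g A m δ univ := by rw [hDcard, mul_comm]
    have hnk : (0:ℝ) ≤ Real.log ((n:ℝ) * (k:ℝ)) := Real.log_nonneg hnk1
    have hlog : ∀ m : ℕ, Real.log (maxSep f A m ε univ) / m ≤
        Real.log (maxSep g A m δ univ) / m + Real.log ((n:ℝ) * (k:ℝ)) := by
      intro m
      set a := maxSep f A m ε univ with ha'
      set b := maxSep g A m δ univ with hb'
      have hab : a ≤ n ^ m * b := hcount m
      have hblog : (0:ℝ) ≤ Real.log b := by simpa using natLog_mono (Nat.zero_le b)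
      have hbdiv : (0:ℝ) ≤ Real.log b / m := div_nonneg hblog (Nat.cast_nonneg m)
      rcases Nat.eq_zero_or_pos a with ha | ha
      · rw [ha]
        simp only [Nat.cast_zero, Real.log_zero, zero_div]
        linarith
      · have hb : 1 ≤ b := by
          by_contra hb0
          push_neg at hb0
          have hb0' : b = 0 := by omega
          rw [hb0', mul_zero] at hab
          omega
        rcases Nat.eq_zero_or_pos m with rfl | hm
        · simp only [Nat.cast_zero, div_zero, zero_add]
          exact hnk
        · have hm' : (0:ℝ) < m := by exact_mod_cast hm
          have hn' : (0:ℝ) < n := by exact_mod_cast hn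
          have hb0 : (0:ℝ) < b := by exact_mod_cast hb
          have h1 : Real.log a ≤ m * Real.log n + Real.log b := by
            have hcast : ((n ^ m * b : ℕ) : ℝ) = (n:ℝ) ^ m * (b:ℝ) := by push_cast; ring
            have h0 := natLog_mono hab
            rw [hcast, Real.log_mul (by positivity) (by positivity), Real.log_pow] at h0
            exact h0
          have h2 : Real.log n ≤ Real.log ((n:ℝ) * (k:ℝ)) := by
            refine Real.log_le_log hn' ?_
            have hk' : (1:ℝ) ≤ (k:ℝ) := by exact_mod_cast hk
            nlinarith
          calc Real.log a / m ≤ (m * Real.log n + Real.log b) / m :=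
                (div_le_div_iff_of_pos_right hm').2 h1
            _ = Real.log n + Real.log b / m := by
                rw [add_div, mul_div_cancel_left₀ _ hm'.ne']
            _ ≤ Real.log b / m + Real.log ((n:ℝ) * (k:ℝ)) := by linarith
    have hE : ∀ m : ℕ, ((Real.log (maxSep f A m ε univ) / m : ℝ) : EReal) ≤
        ((Real.log (maxSep g A m δ univ) / m : ℝ) : EReal)
          + ((Real.log ((n:ℝ) * (k:ℝ)) : ℝ) : EReal) := by
      intro m
      rw [← EReal.coe_add]
      exact EReal.coe_le_coe_iff.mpr (hlog m)
    have hconst : limsup (fun _ : ℕ => ((Real.log ((n:ℝ) * (k:ℝ)) : ℝ) : EReal)) atTop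
        = ((Real.log ((n:ℝ) * (k:ℝ)) : ℝ) : EReal) := limsup_const _
    calc limsup (fun m : ℕ => ((Real.log (maxSep f A m ε univ) / m : ℝ) : EReal)) atTop
        ≤ limsup (fun m : ℕ => ((Real.log (maxSep g A m δ univ) / m : ℝ) : EReal)
            + ((Real.log ((n:ℝ) * (k:ℝ)) : ℝ) : EReal)) atTop :=
          Filter.limsup_le_limsup (Eventually.of_forall hE)
      _ ≤ limsup (fun m : ℕ =>
            ((Real.log (maxSep g A m δ univ) / m : ℝ) : EReal)) atTop
            + ((Real.log ((n:ℝ) * (k:ℝ)) : ℝ) : EReal) := by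
          have h := EReal.limsup_add_le
            (u := fun m : ℕ => ((Real.log (maxSep g A m δ univ) / m : ℝ) : EReal))
            (v := fun _ : ℕ => ((Real.log ((n:ℝ) * (k:ℝ)) : ℝ) : EReal)) (f := atTop)
            (Or.inr (by rw [hconst]; exact EReal.coe_ne_top _))
            (Or.inr (by rw [hconst]; exact EReal.coe_ne_bot _))
          rw [hconst] at h
          exact h
      _ ≤ sepEnt g A univ + ((Real.log ((n:ℝ) * (k:ℝ)) : ℝ) : EReal) := by
          refine add_le_add_left ?_ _
          exact le_iSup (fun p : {ε : ℝ // 0 < ε} =>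
            limsup (fun m : ℕ =>
              ((Real.log (maxSep g A m p univ) / m : ℝ) : EReal)) atTop) ⟨δ, hδpos⟩
end

section
/- Let V_1,…,V_N (N ≥ 2) be nonempty, closed, pairwise disjoint subsets of a compact metric space X, and let f_{0,∞} be a sequence of continuous self-maps such that f_n(V_i) ⊇ V_1 ∪ ⋯ ∪ V_N for all 1 ≤ i ≤ N and n ≥ 0 (coupled-expansion). Then h_A(f_{0,∞}) ≥ log N for every increasing sequence A of nonnegative integers. -/
open Filter Set MeasureTheory

/-- A coupled-expanding nonautonomous system on `N` disjoint closed sets has sequence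
entropy at least `log N` along every sequence. -/
theorem sepEnt_coupled_expanding {X : Type*} [MetricSpace X] [CompactSpace X]
    (f : ℕ → X → X) (hf : ∀ n, Continuous (f n))
    (N : ℕ) (hN : 2 ≤ N) (V : Fin N → Set X)
    (hne : ∀ i, (V i).Nonempty) (hcl : ∀ i, IsClosed (V i))
    (hdisj : ∀ i j, i ≠ j → Disjoint (V i) (V j))
    (hexp : ∀ (n : ℕ) (i : Fin N), (⋃ j, V j) ⊆ f n '' (V i))
    (A : ℕ → ℕ) (hA : StrictMono A) :
    (Real.log N : EReal) ≤ sepEnt f A univ := by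
  classical
  -- a positive separation constant between distinct `V i`'s
  set S : Set (X × X) := ⋃ q ∈ {q : Fin N × Fin N | q.1 ≠ q.2}, V q.1 ×ˢ V q.2 with hSdef
  have hScpt : IsCompact S := by
    apply Set.Finite.isCompact_biUnion (Set.toFinite _)
    intro q _
    exact ((hcl q.1).isCompact.prod (hcl q.2).isCompact)
  have hSne : S.Nonempty := by
    obtain ⟨x, hx⟩ := hne ⟨0, by omega⟩
    obtain ⟨y, hy⟩ := hne ⟨1, by omega⟩
    exact ⟨(x, y), Set.mem_iUnion₂.2 ⟨((⟨0, by omega⟩ : Fin N), (⟨1, by omega⟩ : Fin N)),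
      by simp [Fin.ext_iff], Set.mem_prod.2 ⟨hx, hy⟩⟩⟩
  obtain ⟨p, hpS, hpmin⟩ := hScpt.exists_isMinOn hSne
    (continuous_dist.continuousOn (s := S))
  set ε := dist p.1 p.2 with hεdef
  have hε : 0 < ε := by
    rcases Set.mem_iUnion₂.1 hpS with ⟨q, hq, hp⟩
    refine dist_pos.2 fun h => ?_
    exact Set.disjoint_left.1 (hdisj q.1 q.2 hq) hp.1 (h ▸ hp.2)
  have hsep : ∀ i j : Fin N, i ≠ j → ∀ x ∈ V i, ∀ y ∈ V j, ε ≤ dist x y := by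
    intro i j hij x hx y hy
    exact hpmin (Set.mem_iUnion₂.2 ⟨(i, j), hij, Set.mk_mem_prod hx hy⟩)
  -- trace lemma: realize any itinerary
  have trace : ∀ (m : ℕ) (W : ℕ → Fin N), ∀ z ∈ V (W m),
      ∃ x, nacomp f 0 m x = z ∧ ∀ k ≤ m, nacomp f 0 k x ∈ V (W k) := by
    intro m
    induction m with
    | zero =>
      intro W z hz
      exact ⟨z, rfl, fun k hk => by rw [Nat.le_zero.1 hk]; exact hz⟩
    | succ m ih =>
      intro W z hz
      have hz' : z ∈ f m '' V (W m) := hexp m (W m) (Set.mem_iUnion.2 ⟨W (m + 1), hz⟩)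
      obtain ⟨y, hy, hfy⟩ := hz'
      obtain ⟨x, hx1, hx2⟩ := ih W y hy
      have hxm : nacomp f 0 (m + 1) x = z := by
        show f (0 + m) (nacomp f 0 m x) = z
        rw [zero_add, hx1, hfy]
      refine ⟨x, hxm, fun k hk => ?_⟩
      rcases Nat.eq_or_lt_of_le hk with h | h
      · rw [h, hxm]; exact hz
      · exact hx2 k (Nat.lt_succ_iff.1 h)
  -- boundedness of cardinalities of separated sets
  have hbdd : ∀ (n : ℕ) (δ : ℝ), 0 < δ →
      BddAbove {m | ∃ E : Finset X, IsSepSet f A n δ univ E ∧ E.card = m} := by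
    intro n δ hδ
    obtain ⟨t, -, htfin, htcov⟩ := finite_cover_balls_of_compact (X := X) isCompact_univ (half_pos hδ)
    have hc : ∀ (x : X) (j : Fin n), ∃ c, c ∈ htfin.toFinset ∧
        dist (nacomp f 0 (A j) x) c < δ / 2 := by
      intro x j
      have := htcov (Set.mem_univ (nacomp f 0 (A j) x))
      rcases Set.mem_iUnion₂.1 this with ⟨c, hct, hb⟩
      exact ⟨c, htfin.mem_toFinset.2 hct, Metric.mem_ball.1 hb⟩
    choose g hg1 hg2 using hc
    refine ⟨Fintype.card (Fin n → {a // a ∈ htfin.toFinset}), ?_⟩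
    rintro m ⟨E, ⟨-, hEsep⟩, rfl⟩
    have hinj : Set.InjOn
        (fun x => fun j : Fin n => (⟨g x j, hg1 x j⟩ : {a // a ∈ htfin.toFinset})) E := by
      intro x hx y hy hxy
      by_contra hne'
      obtain ⟨j, hj⟩ := hEsep x hx y hy hne'
      have h1 := hg2 x j
      have h2 := hg2 y j
      have hgeq : g x j = g y j := Subtype.ext_iff.1 (congrFun hxy j)
      rw [hgeq] at h1
      have htri := dist_triangle (nacomp f 0 (A j) x) (g y j) (nacomp f 0 (A j) y)
      rw [dist_comm (g y j) (nacomp f 0 (A j) y)] at htri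
      linarith
    calc E.card ≤ (Finset.univ : Finset (Fin n → {a // a ∈ htfin.toFinset})).card :=
          Finset.card_le_card_of_injOn _ (fun x _ => Finset.mem_univ _) hinj
      _ = _ := Finset.card_univ
  -- main pointwise bound
  have hmain : ∀ n : ℕ, 1 ≤ n →
      (Real.log N : EReal) ≤ ((Real.log (maxSep f A n (ε / 2) univ) / n : ℝ) : EReal) := by
    intro n hn
    have hx : ∀ w : Fin n → Fin N, ∃ x : X,
        ∀ j : Fin n, nacomp f 0 (A j.1) x ∈ V (w j) := by
      intro w
      set m := A (n - 1) with hm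
      set W : ℕ → Fin N :=
        fun t => if h : ∃ j : Fin n, A j.1 = t then w h.choose else w ⟨0, hn⟩ with hWdef
      have hW : ∀ j : Fin n, W (A j.1) = w j := by
        intro j
        have h : ∃ j' : Fin n, A j'.1 = A j.1 := ⟨j, rfl⟩
        simp only [hWdef, dif_pos h]
        congr 1
        exact Fin.ext (hA.injective h.choose_spec)
      obtain ⟨z, hz⟩ := hne (W m)
      obtain ⟨x, -, hx2⟩ := trace m W z hz
      refine ⟨x, fun j => ?_⟩
      have hle : A j.1 ≤ m := hA.monotone (by have := j.isLt; omega)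
      have := hx2 (A j.1) hle
      rwa [hW j] at this
    choose xw hxw using hx
    have hxinj : Function.Injective xw := by
      intro w w' h
      by_contra hww
      obtain ⟨j, hj⟩ : ∃ j, w j ≠ w' j := by
        by_contra hall; push_neg at hall; exact hww (funext hall)
      have h1 := hxw w j
      have h2 := hxw w' j
      rw [h] at h1
      exact (hdisj (w j) (w' j) hj).ne_of_mem h1 h2 rfl
    set E : Finset X := Finset.image xw Finset.univ with hEdef
    have hEcard : E.card = N ^ n := by
      rw [hEdef, Finset.card_image_of_injective _ hxinj, Finset.card_univ,
        Fintype.card_fun]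
      simp
    have hEsep : IsSepSet f A n (ε / 2) univ E := by
      refine ⟨fun x _ => Set.mem_univ x, ?_⟩
      intro x hxE y hyE hxy
      obtain ⟨w, -, rfl⟩ := Finset.mem_image.1 hxE
      obtain ⟨w', -, rfl⟩ := Finset.mem_image.1 hyE
      have hww : w ≠ w' := fun h => hxy (by rw [h])
      obtain ⟨j, hj⟩ : ∃ j, w j ≠ w' j := by
        by_contra hall; push_neg at hall; exact hww (funext hall)
      refine ⟨j, ?_⟩
      have := hsep (w j) (w' j) hj _ (hxw w j) _ (hxw w' j)
      linarith
    have hsle : N ^ n ≤ maxSep f A n (ε / 2) univ :=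
      le_csSup (hbdd n (ε / 2) (half_pos hε)) ⟨E, hEsep, hEcard⟩
    have hn' : (0 : ℝ) < n := by exact_mod_cast hn
    have hNpos : (0 : ℝ) < (N : ℝ) := by
      have : 0 < N := by omega
      exact_mod_cast this
    have h1 : ((N : ℝ)) ^ n ≤ ((maxSep f A n (ε / 2) univ : ℕ) : ℝ) := by
      exact_mod_cast hsle
    have h2 : (n : ℝ) * Real.log N ≤ Real.log (maxSep f A n (ε / 2) univ) := by
      have h3 := Real.log_le_log (show (0 : ℝ) < (N : ℝ) ^ n by positivity) h1
      rwa [Real.log_pow] at h3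
    rw [EReal.coe_le_coe_iff, le_div_iff₀ hn']
    linarith
  have hlim : (Real.log N : EReal) ≤
      limsup (fun n : ℕ => ((Real.log (maxSep f A n (ε / 2) univ) / n : ℝ) : EReal)) atTop := by
    apply le_limsup_of_frequently_le
    · exact (eventually_atTop.2 ⟨1, fun n hn => hmain n hn⟩).frequently
    · exact isBoundedUnder_of ⟨⊤, fun n => le_top⟩
  exact hlim.trans (le_iSup (fun e : {ε : ℝ // 0 < ε} =>
    limsup (fun n : ℕ => ((Real.log (maxSep f A n e univ) / n : ℝ) : EReal)) atTop)
    ⟨ε / 2, half_pos hε⟩)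
end

section
/- Let X be a compact metric space, f_{0,∞} a sequence of continuous self-maps, A = {a_i} an increasing sequence of nonnegative integers, and n ≥ 1. Then h_A(f_{0,∞}^n) = h_{nA}(f_{0,∞}), where f_{0,∞}^n is the n-th compositions system with maps f_{kn}^n = f_{kn+n-1}∘⋯∘f_{kn}, and nA = {n·a_i}. -/
open Filter Set MeasureTheory

lemma nacomp_add {X : Type*} (f : ℕ → X → X) (a m : ℕ) :
    nacomp f 0 (a + m) = nacomp f a m ∘ nacomp f 0 a := by
  induction m with
  | zero => rfl
  | succ m ih =>
    show nacomp f 0 (a + m + 1) = _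
    rw [show nacomp f 0 (a + m + 1) = f (0 + (a + m)) ∘ nacomp f 0 (a + m) from rfl, ih,
      Nat.zero_add]
    rfl

lemma nacomp_compSys {X : Type*} (f : ℕ → X → X) (n k : ℕ) :
    nacomp (compSys f n) 0 k = nacomp f 0 (n * k) := by
  induction k with
  | zero => rfl
  | succ k ih =>
    rw [show nacomp (compSys f n) 0 (k + 1)
        = compSys f n (0 + k) ∘ nacomp (compSys f n) 0 k from rfl, ih]
    rw [Nat.mul_succ, nacomp_add]
    simp [compSys, Nat.zero_add, Nat.mul_comm]

/-- `h_A(f_{0,∞}^n) = h_{nA}(f_{0,∞})`. -/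
theorem sepEnt_compSys {X : Type*} [MetricSpace X] [CompactSpace X]
    (f : ℕ → X → X) (hf : ∀ m, Continuous (f m))
    (A : ℕ → ℕ) (hA : StrictMono A) (n : ℕ) (hn : 1 ≤ n) :
    sepEnt (compSys f n) A univ = sepEnt f (fun i => n * A i) univ := by
  have hsep : ∀ (k : ℕ) (ε : ℝ) (E : Finset X),
      IsSepSet (compSys f n) A k ε univ E ↔ IsSepSet f (fun i => n * A i) k ε univ E := by
    intro k ε E
    unfold IsSepSet
    simp only [nacomp_compSys]
  have hmax : ∀ (k : ℕ) (ε : ℝ),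
      maxSep (compSys f n) A k ε univ = maxSep f (fun i => n * A i) k ε univ := by
    intro k ε
    unfold maxSep
    congr 1
    ext m
    simp only [hsep]
  unfold sepEnt
  congr 1
  funext ε
  congr 1
  funext k
  rw [hmax]
end

section
/- Let X be a compact metric space, f_{0,∞} a sequence of continuous self-maps, A an increasing sequence of nonnegative integers, and σ the shift on sequences: σ(a_1,a_2,…) = (a_2,a_3,…). Then for every k ≥ 1, h_A(f_{0,∞}) = h_{σ^k(A)}(f_{0,∞}). -/
open Filter Set MeasureTheory

lemma ereal_limsup_le_of_vanish {u v : ℕ → ℝ} {c : ℝ}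
    (h : ∀ n : ℕ, 1 ≤ n → u n ≤ c / n + v n) :
    limsup (fun n => ((u n : ℝ) : EReal)) atTop ≤
      limsup (fun n => ((v n : ℝ) : EReal)) atTop := by
  have h0 : limsup (fun n : ℕ => ((c / n : ℝ) : EReal)) atTop = (0 : EReal) := by
    have : Tendsto (fun n : ℕ => ((c / n : ℝ) : EReal)) atTop (nhds ((0 : ℝ) : EReal)) :=
      (continuous_coe_real_ereal.tendsto 0).comp (tendsto_const_div_atTop_nhds_zero_nat c)
    simpa using this.limsup_eq
  have hle : limsup (fun n => ((u n : ℝ) : EReal)) atTop ≤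
      limsup ((fun n : ℕ => ((c / n : ℝ) : EReal)) + fun n => ((v n : ℝ) : EReal)) atTop := by
    refine limsup_le_limsup ?_
    filter_upwards [eventually_ge_atTop 1] with n hn
    have := h n hn
    show ((u n : ℝ) : EReal) ≤ ((c / n : ℝ) : EReal) + ((v n : ℝ) : EReal)
    rw [← EReal.coe_add]
    exact_mod_cast this
  refine hle.trans ?_
  have := EReal.limsup_add_le (f := atTop)
    (u := fun n : ℕ => ((c / n : ℝ) : EReal)) (v := fun n => ((v n : ℝ) : EReal))
    (Or.inl (by rw [h0]; exact EReal.zero_ne_bot)) (Or.inl (by rw [h0]; exact EReal.zero_ne_top))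
  rw [h0, zero_add] at this
  exact this

section Aux
variable {X : Type*} [MetricSpace X]

lemma isSepSet_of_subindex {f : ℕ → X → X} {A B : ℕ → ℕ} {n m : ℕ} {ε : ℝ} {Λ : Set X}
    {E : Finset X} (h : ∀ j : Fin n, ∃ j' : Fin m, B j' = A j)
    (hE : IsSepSet f A n ε Λ E) : IsSepSet f B m ε Λ E := by
  refine ⟨hE.1, fun x hx y hy hxy => ?_⟩
  obtain ⟨j, hj⟩ := hE.2 x hx y hy hxy
  obtain ⟨j', hj'⟩ := h j
  exact ⟨j', by rwa [hj']⟩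

variable {f : ℕ → X → X} {ε : ℝ} {t : Finset X}
  (hnet : ∀ y : X, ∃ c ∈ t, dist y c < ε / 2)

noncomputable def nb (hnet : ∀ y : X, ∃ c ∈ t, dist y c < ε / 2) (y : X) : X :=
  (hnet y).choose

lemma nb_mem (y : X) : nb hnet y ∈ t := (hnet y).choose_spec.1
lemma nb_dist (y : X) : dist y (nb hnet y) < ε / 2 := (hnet y).choose_spec.2

include hnet in
lemma card_le_pow {B : ℕ → ℕ} {n : ℕ} {E : Finset X}
    (hE : IsSepSet f B n ε univ E) : E.card ≤ t.card ^ n := by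
  classical
  have := Finset.card_le_card_of_injOn
    (fun x (j : Fin n) => nb hnet (nacomp f 0 (B j) x))
    (t := Fintype.piFinset fun _ : Fin n => t)
    (fun x _ => Fintype.mem_piFinset.2 fun j => nb_mem hnet _)
    (fun x hx y hy hxy => by
      by_contra hne
      obtain ⟨j, hj⟩ := hE.2 x hx y hy hne
      have hc : nb hnet (nacomp f 0 (B j) x) = nb hnet (nacomp f 0 (B j) y) :=
        congrFun hxy j
      have h1 := nb_dist hnet (nacomp f 0 (B j) x)
      have h2 := nb_dist hnet (nacomp f 0 (B j) y)
      rw [hc] at h1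
      have := dist_triangle_right (nacomp f 0 (B j) x) (nacomp f 0 (B j) y)
        (nb hnet (nacomp f 0 (B j) y))
      linarith)
  rwa [Fintype.card_piFinset_const] at this

lemma empty_isSepSet (B : ℕ → ℕ) (n : ℕ) : IsSepSet f B n ε univ (∅ : Finset X) :=
  ⟨by simp, fun x hx => absurd hx (Finset.notMem_empty x)⟩

include hnet in
lemma sepSet_bdd (B : ℕ → ℕ) (n : ℕ) :
    BddAbove {m | ∃ E : Finset X, IsSepSet f B n ε univ E ∧ E.card = m} :=
  ⟨t.card ^ n, by rintro m ⟨E, hE, rfl⟩; exact card_le_pow hnet hE⟩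

include hnet in
lemma card_le_maxSep {B : ℕ → ℕ} {n : ℕ} {E : Finset X}
    (hE : IsSepSet f B n ε univ E) : E.card ≤ maxSep f B n ε univ :=
  le_csSup (sepSet_bdd hnet B n) ⟨E, hE, rfl⟩

include hnet in
lemma maxSep_le_pow (B : ℕ → ℕ) (n : ℕ) : maxSep f B n ε univ ≤ t.card ^ n :=
  csSup_le ⟨0, ∅, empty_isSepSet B n, rfl⟩ (by rintro m ⟨E, hE, rfl⟩; exact card_le_pow hnet hE)

include hnet in
lemma exists_maxSep (B : ℕ → ℕ) (n : ℕ) :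
    ∃ E : Finset X, IsSepSet f B n ε univ E ∧ E.card = maxSep f B n ε univ := by
  have := Nat.sSup_mem (s := {m | ∃ E : Finset X, IsSepSet f B n ε univ E ∧ E.card = m})
    ⟨0, ∅, empty_isSepSet B n, rfl⟩ (sepSet_bdd hnet B n)
  obtain ⟨E, hE, hc⟩ := this
  exact ⟨E, hE, hc⟩

include hnet in
lemma maxSep_shift_le (A : ℕ → ℕ) (k n : ℕ) :
    maxSep f (fun i => A (i + k)) n ε univ ≤ maxSep f A (n + k) ε univ := by
  refine csSup_le ⟨0, ∅, empty_isSepSet _ n, rfl⟩ ?_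
  rintro m ⟨E, hE, rfl⟩
  refine card_le_maxSep hnet (isSepSet_of_subindex ?_ hE)
  exact fun j => ⟨⟨j.1 + k, by omega⟩, rfl⟩

include hnet in
lemma maxSep_le_shift (A : ℕ → ℕ) (k n : ℕ) :
    maxSep f A (n + k) ε univ ≤ t.card ^ k * maxSep f (fun i => A (i + k)) n ε univ := by
  classical
  obtain ⟨E, hE, hc⟩ := exists_maxSep hnet A (n + k)
  rw [← hc]
  set ψ : X → (Fin k → X) := fun x j => nb hnet (nacomp f 0 (A j.1) x) with hψ
  rw [Finset.card_eq_sum_card_fiberwise (f := ψ)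
    (t := Fintype.piFinset fun _ : Fin k => t)
    (fun x _ => Fintype.mem_piFinset.2 fun j => nb_mem hnet _)]
  calc ∑ y ∈ Fintype.piFinset fun _ : Fin k => t, (E.filter fun x => ψ x = y).card
      ≤ ∑ y ∈ Fintype.piFinset fun _ : Fin k => t,
          maxSep f (fun i => A (i + k)) n ε univ := by
        refine Finset.sum_le_sum fun y _ => ?_
        refine card_le_maxSep hnet ⟨fun x _ => mem_univ x, ?_⟩
        intro x hx z hz hxz
        obtain ⟨hxE, hxy⟩ := Finset.mem_filter.1 hx
        obtain ⟨hzE, hzy⟩ := Finset.mem_filter.1 hz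
        obtain ⟨j, hj⟩ := hE.2 x hxE z hzE hxz
        by_cases hjk : j.1 < k
        · exfalso
          have hc1 : ψ x ⟨j.1, hjk⟩ = ψ z ⟨j.1, hjk⟩ := by rw [hxy, hzy]
          simp only [hψ] at hc1
          have h1 := nb_dist hnet (nacomp f 0 (A j.1) x)
          have h2 := nb_dist hnet (nacomp f 0 (A j.1) z)
          rw [hc1] at h1
          have := dist_triangle_right (nacomp f 0 (A j.1) x) (nacomp f 0 (A j.1) z)
            (nb hnet (nacomp f 0 (A j.1) z))
          have hj' : ε < dist (nacomp f 0 (A j.1) x) (nacomp f 0 (A j.1) z) := hj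
          linarith
        · refine ⟨⟨j.1 - k, by omega⟩, ?_⟩
          have : j.1 - k + k = j.1 := by omega
          simpa [this] using hj
    _ = t.card ^ k * maxSep f (fun i => A (i + k)) n ε univ := by
        rw [Finset.sum_const, Fintype.card_piFinset_const, smul_eq_mul]

end Aux

section Main
variable {X : Type*} [MetricSpace X] [CompactSpace X]

omit [CompactSpace X] in
lemma maxSep_of_isEmpty [IsEmpty X] (f : ℕ → X → X) (B : ℕ → ℕ) (n : ℕ) (ε : ℝ) (Λ : Set X) :
    maxSep f B n ε Λ = 0 := by
  unfold maxSep
  have : {m | ∃ E : Finset X, IsSepSet f B n ε Λ E ∧ E.card = m} = {0} := by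
    ext m
    constructor
    · rintro ⟨E, hE, rfl⟩
      have : E = ∅ := Finset.eq_empty_of_forall_notMem fun x _ => (IsEmpty.false x).elim
      simp [this]
    · rintro rfl
      exact ⟨∅, ⟨by simp, fun x hx => absurd hx (Finset.notMem_empty x)⟩, rfl⟩
  rw [this, csSup_singleton]

lemma limsup_shift_eq [Nonempty X] (f : ℕ → X → X) (A : ℕ → ℕ) (k : ℕ)
    {ε : ℝ} (hε : 0 < ε) :
    limsup (fun n : ℕ => ((Real.log (maxSep f A n ε univ) / n : ℝ) : EReal)) atTop =
      limsup (fun n : ℕ =>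
        ((Real.log (maxSep f (fun i => A (i + k)) n ε univ) / n : ℝ) : EReal)) atTop := by
  obtain ⟨s, -, hsfin, hscov⟩ := finite_cover_balls_of_compact (isCompact_univ : IsCompact (univ : Set X)) (half_pos hε)
  set t : Finset X := hsfin.toFinset with ht
  have hnet : ∀ y : X, ∃ c ∈ t, dist y c < ε / 2 := by
    intro y
    obtain ⟨c, hc, hyc⟩ := Set.mem_iUnion₂.1 (hscov (mem_univ y))
    exact ⟨c, hsfin.mem_toFinset.2 hc, Metric.mem_ball.1 hyc⟩
  set sA : ℕ → ℕ := fun n => maxSep f A n ε univ with hsA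
  set sA' : ℕ → ℕ := fun n => maxSep f (fun i => A (i + k)) n ε univ with hsA'
  have hone : ∀ (B : ℕ → ℕ) (n : ℕ), 1 ≤ maxSep f B n ε univ := by
    intro B n
    obtain ⟨x₀⟩ := ‹Nonempty X›
    have : IsSepSet f B n ε univ ({x₀} : Finset X) :=
      ⟨fun x _ => mem_univ x, fun x hx y hy hxy => by
        simp only [Finset.mem_singleton] at hx hy
        exact absurd (hx.trans hy.symm) hxy⟩
    simpa using card_le_maxSep hnet this
  have hM1 : 1 ≤ t.card := by
    obtain ⟨x₀⟩ := ‹Nonempty X›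
    obtain ⟨c, hc, -⟩ := hnet x₀
    exact Finset.card_pos.2 ⟨c, hc⟩
  set M : ℝ := (t.card : ℝ) with hM
  have hM1' : (1 : ℝ) ≤ M := by rw [hM]; exact_mod_cast hM1
  have hlogM : 0 ≤ Real.log M := Real.log_nonneg hM1'
  apply le_antisymm
  · -- h_A ≤ h_{σ^k A}
    rw [← limsup_nat_add (fun n : ℕ => ((Real.log (sA n) / n : ℝ) : EReal)) k]
    refine ereal_limsup_le_of_vanish (c := Real.log (M ^ k)) (fun n hn => ?_)
    have key : (sA (n + k) : ℝ) ≤ M ^ k * (sA' n : ℝ) := by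
      have h := maxSep_le_shift (f := f) hnet A k n
      rw [hM]
      calc ((sA (n + k) : ℕ) : ℝ) ≤ ((t.card ^ k * sA' n : ℕ) : ℝ) := Nat.cast_le.2 h
        _ = (t.card : ℝ) ^ k * (sA' n : ℝ) := by push_cast; ring
    have ha : (1 : ℝ) ≤ (sA (n + k) : ℝ) := by exact_mod_cast hone A (n + k)
    have hb : (1 : ℝ) ≤ (sA' n : ℝ) := by exact_mod_cast hone _ n
    have hmk : (1 : ℝ) ≤ M ^ k := one_le_pow₀ hM1'
    have hlog : Real.log (sA (n + k)) ≤ Real.log (M ^ k) + Real.log (sA' n) := by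
      rw [← Real.log_mul (by linarith) (by linarith)]
      exact Real.log_le_log (by linarith) key
    have hn0 : (0 : ℝ) < (n : ℝ) := by exact_mod_cast hn
    have hnk0 : (0 : ℝ) < ((n + k : ℕ) : ℝ) := by positivity
    have hnum : 0 ≤ Real.log (M ^ k) + Real.log (sA' n) :=
      add_nonneg (Real.log_nonneg hmk) (Real.log_nonneg hb)
    calc Real.log (sA (n + k)) / ((n + k : ℕ) : ℝ)
        ≤ (Real.log (M ^ k) + Real.log (sA' n)) / ((n + k : ℕ) : ℝ) := by gcongr
      _ ≤ (Real.log (M ^ k) + Real.log (sA' n)) / (n : ℝ) := by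
          apply div_le_div_of_nonneg_left hnum hn0
          push_cast; linarith [Nat.cast_nonneg (α := ℝ) k]
      _ = Real.log (M ^ k) / (n : ℝ) + Real.log (sA' n) / (n : ℝ) := add_div _ _ _
  · -- h_{σ^k A} ≤ h_A
    have hgoal : limsup (fun n : ℕ => ((Real.log (sA' n) / n : ℝ) : EReal)) atTop ≤
        limsup (fun n : ℕ =>
          ((Real.log (sA (n + k)) / ((n + k : ℕ) : ℝ) : ℝ) : EReal)) atTop := by
      refine ereal_limsup_le_of_vanish (c := (k : ℝ) * Real.log M) (fun n hn => ?_)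
      have hn0 : (0 : ℝ) < (n : ℝ) := by exact_mod_cast hn
      have hnk0 : (0 : ℝ) < ((n + k : ℕ) : ℝ) := by positivity
      set L : ℝ := Real.log (sA (n + k)) with hL
      have hb : (1 : ℝ) ≤ (sA' n : ℝ) := by exact_mod_cast hone _ n
      have hmono : Real.log (sA' n) ≤ L := by
        refine Real.log_le_log (by linarith) ?_
        exact_mod_cast maxSep_shift_le (f := f) hnet A k n
      have hL0 : 0 ≤ L := le_trans (Real.log_nonneg hb) hmono
      have hLM : L ≤ ((n + k : ℕ) : ℝ) * Real.log M := by
        have h1 : (sA (n + k) : ℝ) ≤ (t.card : ℝ) ^ (n + k) := by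
          exact_mod_cast maxSep_le_pow (f := f) hnet A (n + k)
        have h2 : (0 : ℝ) < (sA (n + k) : ℝ) := by
          have := hone A (n + k); positivity
        calc L ≤ Real.log ((t.card : ℝ) ^ (n + k)) := Real.log_le_log h2 h1
          _ = ((n + k : ℕ) : ℝ) * Real.log M := by rw [Real.log_pow, hM]
      have hid : L / (n : ℝ) =
          L / ((n + k : ℕ) : ℝ) + (L / ((n + k : ℕ) : ℝ)) * ((k : ℝ) / (n : ℝ)) := by
        field_simp
        push_cast; ring
      have hterm : (L / ((n + k : ℕ) : ℝ)) * ((k : ℝ) / (n : ℝ)) ≤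
          Real.log M * ((k : ℝ) / (n : ℝ)) := by
        apply mul_le_mul_of_nonneg_right _ (by positivity)
        exact (div_le_iff₀ hnk0).2 (by linarith)
      calc Real.log (sA' n) / (n : ℝ) ≤ L / (n : ℝ) := by gcongr
        _ ≤ L / ((n + k : ℕ) : ℝ) + Real.log M * ((k : ℝ) / (n : ℝ)) := by
            rw [hid]; linarith
        _ = (k : ℝ) * Real.log M / (n : ℝ) + L / ((n + k : ℕ) : ℝ) := by ring
    rw [limsup_nat_add (fun n : ℕ => ((Real.log (sA n) / n : ℝ) : EReal)) k] at hgoal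
    exact hgoal

end Main

/-- Sequence entropy is invariant under shifting the sequence: `h_A(f) = h_{σ^k A}(f)`. -/
theorem sepEnt_shift_seq {X : Type*} [MetricSpace X] [CompactSpace X]
    (f : ℕ → X → X) (hf : ∀ n, Continuous (f n))
    (A : ℕ → ℕ) (hA : StrictMono A) (k : ℕ) (hk : 1 ≤ k) :
    sepEnt f A univ = sepEnt f (fun i => A (i + k)) univ := by
  rcases isEmpty_or_nonempty X with hX | hX
  · unfold sepEnt
    simp only [maxSep_of_isEmpty]
  · unfold sepEnt
    exact iSup_congr fun ε => limsup_shift_eq f A k ε.2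
end
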